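/- arXiv:1908.04642 — 2 statements merged into one kernel-verified Lean document; each statement's English description precedes it below -/
import Mathlib

section
/- Let (X, R, C, F) be a CRS with food set and set Y_0 = Φ_{X_F}(∅). Then Φ_{Y_0}(Y_0) ⊆ Y_0; consequently the discrete dynamics with initial condition Y_0 = Φ_{X_F}(∅) is eventually constant, i.e. has a fixed point Φ_{X_F}(∅)*. -/
open Set

universe u

/-- Domain of a reaction: chemicals consumed. -/
def rDom {X : Type u} (r : X → ℤ) : Set X := {x | r x < 0}

/-- Range of a reaction: chemicals produced. -/
def rRan {X : Type u} (r : X → ℤ) : Set X := {x | 0 < r x}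

/-- Function of a reaction: `φ_r(Y) = ran(r)` if `dom(r) ⊆ Y`, else `∅`. -/
def phiRxn {X : Type u} (r : X → ℤ) : Set X → Set X :=
  fun Y => {x | rDom r ⊆ Y ∧ x ∈ rRan r}

/-- Sum of two maps on the power set: `(φ + ψ)(Y) = φ(Y) ∪ ψ(Y)`. -/
def mapAdd {X : Type u} (φ ψ : Set X → Set X) : Set X → Set X := fun Y => φ Y ∪ ψ Y

/-- The zero map `Y ↦ ∅`. -/
def mapZero {X : Type u} : Set X → Set X := fun _ => (∅ : Set X)

/-- Partial order: `φ ≤ ψ` iff `φ(Y) ⊆ ψ(Y)` for all `Y`. -/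
def mapLE {X : Type u} (φ ψ : Set X → Set X) : Prop := ∀ Y : Set X, φ Y ⊆ ψ Y

/-- Monotone map on the power set. -/
def MonotoneMap {X : Type u} (φ : Set X → Set X) : Prop :=
  ∀ ⦃Z Y : Set X⦄, Z ⊆ Y → φ Z ⊆ φ Y

/-- A chemical reaction system on the set of chemicals `X`: a finite set of reactions
`R` and a set `C ⊆ X × R` of catalyzed reactions. -/
structure CRS (X : Type u) where
  R : Set (X → ℤ)
  hR : R.Finite
  C : Set (X × (X → ℤ))
  hC : ∀ p ∈ C, p.2 ∈ R

/-- Function of a chemical: `φ_x = Σ_{(x,r) ∈ C} φ_r`. -/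
def phiChem {X : Type u} (𝒞 : CRS X) (x : X) : Set X → Set X :=
  fun Y => {y | ∃ r, (x, r) ∈ 𝒞.C ∧ y ∈ phiRxn r Y}

/-- The smallest set of maps containing the generators `G` and the zero map and
closed under composition and sum. -/
inductive InClosure {X : Type u} (G : Set (Set X → Set X)) : (Set X → Set X) → Prop
  | gen {φ} : φ ∈ G → InClosure G φ
  | zero : InClosure G mapZero
  | comp {φ ψ} : InClosure G φ → InClosure G ψ → InClosure G (φ ∘ ψ)
  | add {φ ψ} : InClosure G φ → InClosure G ψ → InClosure G (mapAdd φ ψ)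

/-- The semigroup model `S(Y)` generated by the functions of the chemicals of `Y`.
The full semigroup model `S` is `SgModel 𝒞 Set.univ`. -/
def SgModel {X : Type u} (𝒞 : CRS X) (Y : Set X) : Set (Set X → Set X) :=
  {φ | InClosure {ψ | ∃ x ∈ Y, ψ = phiChem 𝒞 x} φ}

/-- The function `Φ_Y` of a subset `Y`, the sum (pointwise union) of all elements
of `S(Y)`. -/
def PhiSub {X : Type u} (𝒞 : CRS X) (Y : Set X) : Set X → Set X :=
  fun W => {y | ∃ φ ∈ SgModel 𝒞 Y, y ∈ φ W}

/-- The closure `F̄` of a food set: the smallest set containing `F` such that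
`ran(r) ⊆ F̄` for every reaction `r ∈ R` with `dom(r) ⊆ F` catalyzed by some
chemical of `F`. -/
def foodClosure {X : Type u} (𝒞 : CRS X) (F : Set X) : Set X :=
  ⋂₀ {G | F ⊆ G ∧ ∀ r ∈ 𝒞.R, rDom r ⊆ F → (∃ x ∈ F, (x, r) ∈ 𝒞.C) → rRan r ⊆ G}

/-- `X_F = X \ F̄`. -/
def XF {X : Type u} (𝒞 : CRS X) (F : Set X) : Set X := (foodClosure 𝒞 F)ᶜ

/-- The `F`-modification of a map:
`φ_F(Z) = (φ(Z ∪ F̄) ∪ Φ_{F̄}(Z ∪ F̄)) ∩ X_F`. -/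
def Fmod {X : Type u} (𝒞 : CRS X) (F : Set X) (φ : Set X → Set X) : Set X → Set X :=
  fun Z =>
    (φ (Z ∪ foodClosure 𝒞 F) ∪ PhiSub 𝒞 (foodClosure 𝒞 F) (Z ∪ foodClosure 𝒞 F)) ∩ XF 𝒞 F

/-- `S_F(Y)`: the smallest set of maps containing `{(φ_x)_F : x ∈ Y}` and the zero map,
closed under composition and sum. -/
def SgModelF {X : Type u} (𝒞 : CRS X) (F : Set X) (Y : Set X) : Set (Set X → Set X) :=
  {φ | InClosure {ψ | ∃ x ∈ Y, ψ = Fmod 𝒞 F (phiChem 𝒞 x)} φ}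

/-- The function `Φ_Y` of `Y ⊆ X_F` in the semigroup model with food set. -/
def PhiSubF {X : Type u} (𝒞 : CRS X) (F : Set X) (Y : Set X) : Set X → Set X :=
  fun W => {y | ∃ φ ∈ SgModelF 𝒞 F Y, y ∈ φ W}

/-- The semigroup model with food set `S_F`, generated by the `F`-modifications of all
elements of `S`. -/
def SgF {X : Type u} (𝒞 : CRS X) (F : Set X) : Set (Set X → Set X) :=
  {φ | InClosure {ψ | ∃ φ' ∈ SgModel 𝒞 Set.univ, ψ = Fmod 𝒞 F φ'} φ}

/-- The discrete dynamics: `Y_{n+1} = Φ_{Y_n}(Y_n)`. -/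
def dyn {X : Type u} (𝒞 : CRS X) (F : Set X) (Y0 : Set X) : ℕ → Set X
  | 0 => Y0
  | n + 1 => PhiSubF 𝒞 F (dyn 𝒞 F Y0 n) (dyn 𝒞 F Y0 n)

/-- `(S_F, ∘)` is nilpotent: some `N` such that every composition of `N` elements of
`S_F` is the zero map. -/
def NilpotentF {X : Type u} (𝒞 : CRS X) (F : Set X) : Prop :=
  ∃ N : ℕ, ∀ l : List (Set X → Set X),
    l.length = N → (∀ φ ∈ l, φ ∈ SgF 𝒞 F) → l.foldr (· ∘ ·) id = mapZero

/-- `x` is generated from `W` (conditions (F1) and (F2)); if `withCat = true`, in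
addition every reaction used is catalyzed by some chemical. -/
def GenFrom {X : Type u} (𝒞 : CRS X) (W : Set X) (withCat : Bool) (x : X) : Prop :=
  ∃ (J : Finset ℕ) (ri : ℕ → X → ℤ) (μ : ℕ → ℕ) (n : ℕ) (P : ℕ → Finset ℕ),
    (∀ i ∈ J, ri i ∈ 𝒞.R) ∧
    (∀ i ∈ J, 0 < μ i) ∧
    x ∈ rRan (fun y => ∑ i ∈ J, (μ i : ℤ) * ri i y) ∧
    rDom (fun y => ∑ i ∈ J, (μ i : ℤ) * ri i y) ⊆ W ∧
    0 < n ∧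
    (∀ j k, j < n → k < n → j ≠ k → Disjoint (P j) (P k)) ∧
    J = (Finset.range n).biUnion P ∧
    rDom (fun y => ∑ i ∈ P 0, (μ i : ℤ) * ri i y) ⊆ W ∧
    (∀ j, j + 1 < n →
      rDom (fun y => ∑ i ∈ P (j + 1), (μ i : ℤ) * ri i y) ⊆
        {y | ∃ k ≤ j, y ∈ rRan (fun z => ∑ i ∈ P k, (μ i : ℤ) * ri i z)}) ∧
    (withCat = true → ∀ i ∈ J, ∃ c : X, (c, ri i) ∈ 𝒞.C)

/-- A CRS with food set `F` is RAF: `(X,R,C)` is generated from `F̄`, and every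
`x ∈ X_F` is generated from `F̄` using only catalyzed reactions. -/
def IsRAF {X : Type u} (𝒞 : CRS X) (F : Set X) : Prop :=
  (∀ x : X, GenFrom 𝒞 (foodClosure 𝒞 F) false x) ∧
  (∀ x ∈ XF 𝒞 F, GenFrom 𝒞 (foodClosure 𝒞 F) true x)

/-- Restriction of a reaction to a subset of chemicals. -/
def restRxn {X : Type u} (X' : Set X) (r : X → ℤ) : X' → ℤ := fun y => r y

/-- `R|_{X'}`. -/
def restR {X : Type u} (𝒞 : CRS X) (X' : Set X) : Set (X' → ℤ) :=
  {r' | ∃ r ∈ 𝒞.R, rDom r ⊆ X' ∧ (rRan r ∩ X').Nonempty ∧ r' = restRxn X' r}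

/-- `C|_{X'}`. -/
def restC {X : Type u} (𝒞 : CRS X) (X' : Set X) : Set (X' × (X' → ℤ)) :=
  {p | ∃ r, ((p.1 : X), r) ∈ 𝒞.C ∧ restRxn X' r ∈ restR 𝒞 X' ∧ p.2 = restRxn X' r}

/-- The subnetwork `(X', R|_{X'}, C|_{X'})`. -/
def restCRS {X : Type u} (𝒞 : CRS X) (X' : Set X) : CRS X' where
  R := restR 𝒞 X'
  hR := (𝒞.hR.image (restRxn X')).subset (by
    rintro r' ⟨r, hr, -, -, rfl⟩
    exact ⟨r, hr, rfl⟩)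
  C := restC 𝒞 X'
  hC := by
    rintro p ⟨r, -, hmem, hp⟩
    rw [hp]
    exact hmem

/-- `X' ⊆ X` is a RAF subset of `(X,R,C,F)`. -/
def IsRAFSubset {X : Type u} (𝒞 : CRS X) (F : Set X) (X' : Set X) : Prop :=
  IsRAF (restCRS 𝒞 X') {y : X' | (y : X) ∈ F} ∧
  foodClosure 𝒞 F ⊆ X' ∧
  (∀ r ∈ 𝒞.R, rDom r ⊆ X' → (rRan r ∩ X').Nonempty → rRan r ⊆ X')

lemma inClosure_monotone {X : Type u} {G : Set (Set X → Set X)}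
    (hG : ∀ φ ∈ G, MonotoneMap φ) {φ} (h : InClosure G φ) : MonotoneMap φ := by
  induction h with
  | gen h => exact hG _ h
  | zero => intro Z Y _ x hx; exact hx
  | comp h1 h2 ih1 ih2 => intro Z Y hZY; exact ih1 (ih2 hZY)
  | add h1 h2 ih1 ih2 => intro Z Y hZY; exact Set.union_subset_union (ih1 hZY) (ih2 hZY)

lemma phiChem_monotone {X : Type u} (𝒞 : CRS X) (x : X) : MonotoneMap (phiChem 𝒞 x) := by
  rintro Z Y hZY y ⟨r, hr, hdom, hran⟩
  exact ⟨r, hr, hdom.trans hZY, hran⟩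

lemma sgModel_monotone {X : Type u} (𝒞 : CRS X) (Y : Set X) {φ}
    (h : φ ∈ SgModel 𝒞 Y) : MonotoneMap φ := by
  refine inClosure_monotone ?_ h
  rintro ψ ⟨x, -, rfl⟩
  exact phiChem_monotone 𝒞 x

lemma phiSub_monotone {X : Type u} (𝒞 : CRS X) (Y : Set X) : MonotoneMap (PhiSub 𝒞 Y) := by
  rintro Z W hZW y ⟨φ, hφ, hy⟩
  exact ⟨φ, hφ, sgModel_monotone 𝒞 Y hφ hZW hy⟩

lemma fmod_monotone {X : Type u} (𝒞 : CRS X) (F : Set X) {φ} (hφ : MonotoneMap φ) :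
    MonotoneMap (Fmod 𝒞 F φ) := by
  intro Z Y hZY
  apply Set.inter_subset_inter_left
  exact Set.union_subset_union (hφ (Set.union_subset_union_left _ hZY))
    (phiSub_monotone 𝒞 _ (Set.union_subset_union_left _ hZY))

lemma sgModelF_monotone {X : Type u} (𝒞 : CRS X) (F Y : Set X) {φ}
    (h : φ ∈ SgModelF 𝒞 F Y) : MonotoneMap φ := by
  refine inClosure_monotone ?_ h
  rintro ψ ⟨x, -, rfl⟩
  exact fmod_monotone 𝒞 F (phiChem_monotone 𝒞 x)

lemma sgModelF_range_XF {X : Type u} (𝒞 : CRS X) (F Y : Set X) {φ}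
    (h : φ ∈ SgModelF 𝒞 F Y) : ∀ W, φ W ⊆ XF 𝒞 F := by
  induction h with
  | gen h =>
    obtain ⟨x, -, rfl⟩ := h
    intro W
    exact Set.inter_subset_right
  | zero => intro W x hx; exact absurd hx (Set.notMem_empty x)
  | comp h1 h2 ih1 ih2 => intro W; exact ih1 _
  | add h1 h2 ih1 ih2 => intro W; exact Set.union_subset (ih1 W) (ih2 W)

lemma sgModelF_mono_Y {X : Type u} (𝒞 : CRS X) (F : Set X) {Y Y' : Set X}
    (hYY : Y ⊆ Y') {φ} (h : φ ∈ SgModelF 𝒞 F Y) : φ ∈ SgModelF 𝒞 F Y' := by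
  induction h with
  | gen h =>
    obtain ⟨x, hx, rfl⟩ := h
    exact InClosure.gen ⟨x, hYY hx, rfl⟩
  | zero => exact InClosure.zero
  | comp h1 h2 ih1 ih2 => exact InClosure.comp ih1 ih2
  | add h1 h2 ih1 ih2 => exact InClosure.add ih1 ih2

lemma exists_dominating {X : Type u} (𝒞 : CRS X) (F Y W : Set X) {T : Set X}
    (hT : T.Finite) (h : T ⊆ PhiSubF 𝒞 F Y W) :
    ∃ ψ ∈ SgModelF 𝒞 F Y, T ⊆ ψ W := by
  refine Set.Finite.induction_on
    (motive := fun T _ => T ⊆ PhiSubF 𝒞 F Y W → ∃ ψ ∈ SgModelF 𝒞 F Y, T ⊆ ψ W) T hT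
    (fun _ => ⟨mapZero, InClosure.zero, by simp⟩) ?_ h
  rintro a s - - ih hsub'
  obtain ⟨ψ, hψ, hsub⟩ := ih (fun x hx => hsub' (Set.mem_insert_of_mem a hx))
  obtain ⟨χ, hχ, ha⟩ := hsub' (Set.mem_insert a s)
  refine ⟨mapAdd χ ψ, InClosure.add hχ hψ, ?_⟩
  rintro x (rfl | hx)
  · exact Or.inl ha
  · exact Or.inr (hsub hx)

lemma dyn_succ_subset {X : Type u} [Finite X] (𝒞 : CRS X) (F : Set X) :
    ∀ n, dyn 𝒞 F (PhiSubF 𝒞 F (XF 𝒞 F) ∅) (n + 1) ⊆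
      dyn 𝒞 F (PhiSubF 𝒞 F (XF 𝒞 F) ∅) n := by
  set Y0 := PhiSubF 𝒞 F (XF 𝒞 F) ∅ with hY0
  have hbase : PhiSubF 𝒞 F Y0 Y0 ⊆ Y0 := by
    have hY0XF : Y0 ⊆ XF 𝒞 F := by
      rintro y ⟨φ, hφ, hy⟩
      exact sgModelF_range_XF 𝒞 F _ hφ _ hy
    obtain ⟨ψ, hψ, hsub⟩ := exists_dominating 𝒞 F (XF 𝒞 F) ∅ (Set.toFinite Y0)
      (subset_refl _)
    rintro y ⟨φ, hφ, hy⟩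
    have hφ' : φ ∈ SgModelF 𝒞 F (XF 𝒞 F) := sgModelF_mono_Y 𝒞 F hY0XF hφ
    refine ⟨φ ∘ ψ, InClosure.comp hφ' hψ, ?_⟩
    exact sgModelF_monotone 𝒞 F _ hφ' hsub hy
  intro n
  induction n with
  | zero => exact hbase
  | succ n ih =>
    rintro y ⟨φ, hφ, hy⟩
    exact ⟨φ, sgModelF_mono_Y 𝒞 F ih hφ, sgModelF_monotone 𝒞 F _ hφ ih hy⟩

lemma dyn_antitone {X : Type u} [Finite X] (𝒞 : CRS X) (F : Set X) {m n : ℕ}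
    (h : m ≤ n) : dyn 𝒞 F (PhiSubF 𝒞 F (XF 𝒞 F) ∅) n ⊆
      dyn 𝒞 F (PhiSubF 𝒞 F (XF 𝒞 F) ∅) m := by
  induction n with
  | zero => simp_all
  | succ n ih =>
    rcases Nat.eq_or_lt_of_le h with rfl | h'
    · exact subset_rfl
    · exact (dyn_succ_subset 𝒞 F n).trans (ih (Nat.lt_succ_iff.mp h'))

/-- with `Y₀ = Φ_{X_F}(∅)` one has `Φ_{Y₀}(Y₀) ⊆ Y₀`; consequently the
discrete dynamics with initial condition `Y₀` is eventually constant. -/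
theorem dynamics_from_PhiXF_empty_stabilizes {X : Type u} [Finite X]
    (𝒞 : CRS X) (F : Set X) :
    PhiSubF 𝒞 F (PhiSubF 𝒞 F (XF 𝒞 F) ∅) (PhiSubF 𝒞 F (XF 𝒞 F) ∅) ⊆
      PhiSubF 𝒞 F (XF 𝒞 F) ∅ ∧
    ∃ N : ℕ, ∀ n ≥ N,
      dyn 𝒞 F (PhiSubF 𝒞 F (XF 𝒞 F) ∅) n = dyn 𝒞 F (PhiSubF 𝒞 F (XF 𝒞 F) ∅) N := by
  refine ⟨dyn_succ_subset 𝒞 F 0, ?_⟩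
  set Y0 := PhiSubF 𝒞 F (XF 𝒞 F) ∅ with hY0
  have hne : (Set.range fun n => (dyn 𝒞 F Y0 n).ncard).Nonempty := ⟨_, 0, rfl⟩
  obtain ⟨N, hN⟩ := Nat.sInf_mem hne
  refine ⟨N, fun n hn => ?_⟩
  refine Set.eq_of_subset_of_ncard_le (dyn_antitone 𝒞 F hn) ?_ (Set.toFinite _)
  simp only at hN; rw [hN]
  exact Nat.sInf_le ⟨n, rfl⟩
end

section
/- For any CRS with food set (X, R, C, F), every chemical x ∈ Φ_{X_F}(∅) is generated from F̄, i.e. conditions (F1) and (F2) with W = F̄ hold for x; hence Φ_{X_F}(∅) is contained in the maximal F-generated subnetwork of the CRS. -/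
open Set

universe u

section Aux

variable {X : Type u}

/-- `s` is a positive integer combination of reactions of `𝒞`. -/
def ComboG (𝒞 : CRS X) (s : X → ℤ) : Prop :=
  ∃ (J : Finset ℕ) (ri : ℕ → X → ℤ) (μ : ℕ → ℕ),
    (∀ i ∈ J, ri i ∈ 𝒞.R) ∧ (∀ i ∈ J, 0 < μ i) ∧
    ∀ y, s y = ∑ i ∈ J, (μ i : ℤ) * ri i y

/-- `z` is generated from `F̄` with a one-stage combination. -/
def GenG (𝒞 : CRS X) (F : Set X) (z : X) : Prop :=
  ∃ s, ComboG 𝒞 s ∧ z ∈ rRan s ∧ rDom s ⊆ foodClosure 𝒞 F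

lemma comboG_zero (𝒞 : CRS X) : ComboG 𝒞 (fun _ => 0) :=
  ⟨∅, fun _ _ => 0, fun _ => 1, by simp, by simp, by simp⟩

lemma comboG_single {𝒞 : CRS X} {r : X → ℤ} (hr : r ∈ 𝒞.R) : ComboG 𝒞 r :=
  ⟨{0}, fun _ => r, fun _ => 1, by simp [hr], by simp, by simp⟩

lemma comboG_smul {𝒞 : CRS X} {s : X → ℤ} {M : ℕ} (hM : 0 < M) (h : ComboG 𝒞 s) :
    ComboG 𝒞 (fun y => (M : ℤ) * s y) := by
  obtain ⟨J, ri, μ, h1, h2, h3⟩ := h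
  exact ⟨J, ri, fun i => M * μ i, h1, fun i hi => Nat.mul_pos hM (h2 i hi),
    fun y => by simp [h3 y, Finset.mul_sum, Nat.cast_mul, mul_assoc]⟩

lemma comboG_add {𝒞 : CRS X} {s t : X → ℤ} (hs : ComboG 𝒞 s) (ht : ComboG 𝒞 t) :
    ComboG 𝒞 (fun y => s y + t y) := by
  classical
  obtain ⟨J1, r1, m1, hR1, hm1, hs1⟩ := hs
  obtain ⟨J2, r2, m2, hR2, hm2, hs2⟩ := ht
  have hinj1 : Function.Injective (fun i : ℕ => 2 * i) := fun a b h => by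
    simp only at h; omega
  have hinj2 : Function.Injective (fun i : ℕ => 2 * i + 1) := fun a b h => by
    simp only at h; omega
  have hdisj : Disjoint (J1.image (fun i => 2 * i)) (J2.image (fun i => 2 * i + 1)) := by
    rw [Finset.disjoint_left]
    rintro a h1 h2
    obtain ⟨j, _, rfl⟩ := Finset.mem_image.1 h1
    obtain ⟨k, _, hk⟩ := Finset.mem_image.1 h2
    omega
  refine ⟨J1.image (fun i => 2 * i) ∪ J2.image (fun i => 2 * i + 1),
    fun i => if i % 2 = 0 then r1 (i / 2) else r2 (i / 2),
    fun i => if i % 2 = 0 then m1 (i / 2) else m2 (i / 2), ?_, ?_, ?_⟩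
  · intro i hi
    rcases Finset.mem_union.1 hi with h | h
    · obtain ⟨j, hj, rfl⟩ := Finset.mem_image.1 h
      have e0 : (2 * j) % 2 = 0 := by omega
      have e1 : (2 * j) / 2 = j := by omega
      simp only [e0, e1, if_true]
      exact hR1 j hj
    · obtain ⟨j, hj, rfl⟩ := Finset.mem_image.1 h
      have e0 : ¬ ((2 * j + 1) % 2 = 0) := by omega
      have e1 : (2 * j + 1) / 2 = j := by omega
      simp only [e0, e1, if_false]
      exact hR2 j hj
  · intro i hi
    rcases Finset.mem_union.1 hi with h | h
    · obtain ⟨j, hj, rfl⟩ := Finset.mem_image.1 h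
      have e0 : (2 * j) % 2 = 0 := by omega
      have e1 : (2 * j) / 2 = j := by omega
      simp only [e0, e1, if_true]
      exact hm1 j hj
    · obtain ⟨j, hj, rfl⟩ := Finset.mem_image.1 h
      have e0 : ¬ ((2 * j + 1) % 2 = 0) := by omega
      have e1 : (2 * j + 1) / 2 = j := by omega
      simp only [e0, e1, if_false]
      exact hm2 j hj
  · intro y
    show s y + t y = _
    rw [Finset.sum_union hdisj, Finset.sum_image (fun a _ b _ h => hinj1 h),
      Finset.sum_image (fun a _ b _ h => hinj2 h), hs1 y, hs2 y]
    congr 1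
    · refine Finset.sum_congr rfl fun j _ => ?_
      have e0 : (2 * j) % 2 = 0 := by omega
      have e1 : (2 * j) / 2 = j := by omega
      simp only [e0, e1, if_true]
    · refine Finset.sum_congr rfl fun j _ => ?_
      have e0 : ¬ ((2 * j + 1) % 2 = 0) := by omega
      have e1 : (2 * j + 1) / 2 = j := by omega
      simp only [e0, e1, if_false]

lemma comboG_sum {𝒞 : CRS X} {ι : Type*} (D : Finset ι) (f : ι → X → ℤ)
    (h : ∀ d ∈ D, ComboG 𝒞 (f d)) : ComboG 𝒞 (fun y => ∑ d ∈ D, f d y) := by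
  classical
  induction D using Finset.induction_on with
  | empty => simpa using comboG_zero 𝒞
  | @insert a s ha ih =>
    simp only [Finset.sum_insert ha]
    exact comboG_add (h a (Finset.mem_insert_self a s))
      (ih fun d hd => h d (Finset.mem_insert_of_mem hd))

lemma genG_combine [Finite X] {𝒞 : CRS X} {F : Set X} {r : X → ℤ} (hr : r ∈ 𝒞.R)
    {y : X} (hy : y ∈ rRan r) (hyF : y ∉ foodClosure 𝒞 F)
    (hdom : ∀ d ∈ rDom r, d ∈ foodClosure 𝒞 F ∨ GenG 𝒞 F d) :
    GenG 𝒞 F y := by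
  classical
  have hfin : (rDom r \ foodClosure 𝒞 F).Finite := Set.toFinite _
  set D := hfin.toFinset with hD
  have hgen : ∀ d ∈ D, GenG 𝒞 F d := by
    intro d hd
    rw [hD, Set.Finite.mem_toFinset] at hd
    rcases hdom d hd.1 with h | h
    · exact absurd h hd.2
    · exact h
  set s : X → X → ℤ := fun d => if h : GenG 𝒞 F d then h.choose else 0 with hsdef
  have hs : ∀ d ∈ D, ComboG 𝒞 (s d) ∧ d ∈ rRan (s d) ∧ rDom (s d) ⊆ foodClosure 𝒞 F := by
    intro d hd
    have hg := hgen d hd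
    simp only [hsdef, dif_pos hg]
    exact hg.choose_spec
  have hnonneg : ∀ d ∈ D, ∀ z, z ∉ foodClosure 𝒞 F → 0 ≤ s d z := by
    intro d hd z hz
    by_contra hneg
    exact hz ((hs d hd).2.2 (by simpa [rDom] using hneg))
  set M : ℕ := 1 + ∑ d ∈ D, (r d).natAbs with hM
  have hMpos : 0 < M := by omega
  refine ⟨fun z => (∑ d ∈ D, (M : ℤ) * s d z) + r z, ?_, ?_, ?_⟩
  · exact comboG_add (comboG_sum D (fun d z => (M : ℤ) * s d z)
      (fun d hd => comboG_smul hMpos (hs d hd).1)) (comboG_single hr)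
  · have h1 : 0 ≤ ∑ d ∈ D, (M : ℤ) * s d y :=
      Finset.sum_nonneg fun d hd =>
        mul_nonneg (Int.natCast_nonneg M) (hnonneg d hd y hyF)
    have h2 : 0 < r y := hy
    have : 0 < (∑ d ∈ D, (M : ℤ) * s d y) + r y := by linarith
    exact this
  · intro z hz
    have hz' : (∑ d ∈ D, (M : ℤ) * s d z) + r z < 0 := hz
    by_contra hzF
    have hnn : ∀ d ∈ D, 0 ≤ (M : ℤ) * s d z := fun d hd =>
      mul_nonneg (Int.natCast_nonneg M) (hnonneg d hd z hzF)
    have hsum0 : 0 ≤ ∑ d ∈ D, (M : ℤ) * s d z := Finset.sum_nonneg hnn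
    have hrz : r z < 0 := by linarith
    have hzD : z ∈ D := by
      rw [hD, Set.Finite.mem_toFinset]
      exact ⟨hrz, hzF⟩
    have hszz : 1 ≤ s z z := (hs z hzD).2.1
    have hsingle : (M : ℤ) * s z z ≤ ∑ d ∈ D, (M : ℤ) * s d z :=
      Finset.single_le_sum hnn hzD
    have hMle : (M : ℤ) ≤ (M : ℤ) * s z z :=
      le_mul_of_one_le_right (Int.natCast_nonneg M) hszz
    have habs : ((r z).natAbs : ℤ) ≤ ∑ d ∈ D, ((r d).natAbs : ℤ) := by
      exact_mod_cast Finset.single_le_sum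
        (fun d _ => Nat.zero_le ((r d).natAbs)) hzD
    have hMval : (M : ℤ) = 1 + ∑ d ∈ D, ((r d).natAbs : ℤ) := by
      rw [hM]; push_cast; ring
    have h5 : ((r z).natAbs : ℤ) = -(r z) := by omega
    linarith

lemma sgmodel_inv [Finite X] (𝒞 : CRS X) (F : Set X) (Y : Set X) {φ : Set X → Set X}
    (hφ : φ ∈ SgModel 𝒞 Y) :
    ∀ Z : Set X, (∀ z ∈ Z, z ∈ foodClosure 𝒞 F ∨ GenG 𝒞 F z) →
      ∀ y ∈ φ Z, y ∈ foodClosure 𝒞 F ∨ GenG 𝒞 F y := by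
  induction hφ with
  | gen h =>
    obtain ⟨x, _, rfl⟩ := h
    intro Z hZ y hy
    obtain ⟨r, hCr, hdomr, hranr⟩ := hy
    have hrR : r ∈ 𝒞.R := 𝒞.hC (x, r) hCr
    by_cases hyF : y ∈ foodClosure 𝒞 F
    · exact Or.inl hyF
    · exact Or.inr (genG_combine hrR hranr hyF fun d hd => hZ d (hdomr hd))
  | zero => intro Z _ y hy; exact absurd hy (Set.notMem_empty y)
  | comp hφ hψ ihφ ihψ =>
    intro Z hZ y hy
    exact ihφ _ (ihψ Z hZ) y hy
  | add hφ hψ ihφ ihψ =>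
    intro Z hZ y hy
    rcases hy with hy | hy
    · exact ihφ Z hZ y hy
    · exact ihψ Z hZ y hy

lemma sgmodelF_inv [Finite X] (𝒞 : CRS X) (F : Set X) (Y : Set X) {φ : Set X → Set X}
    (hφ : φ ∈ SgModelF 𝒞 F Y) :
    ∀ Z : Set X, (∀ z ∈ Z, z ∈ foodClosure 𝒞 F ∨ GenG 𝒞 F z) →
      ∀ y ∈ φ Z, y ∈ foodClosure 𝒞 F ∨ GenG 𝒞 F y := by
  induction hφ with
  | gen h =>
    obtain ⟨x, _, rfl⟩ := h
    intro Z hZ y hy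
    obtain ⟨hy1, hy2⟩ := hy
    have hyF : y ∉ foodClosure 𝒞 F := hy2
    have hZF : ∀ z ∈ Z ∪ foodClosure 𝒞 F,
        z ∈ foodClosure 𝒞 F ∨ GenG 𝒞 F z := by
      rintro z (hz | hz)
      · exact hZ z hz
      · exact Or.inl hz
    rcases hy1 with hy1 | hy1
    · obtain ⟨r, hCr, hdomr, hranr⟩ := hy1
      have hrR : r ∈ 𝒞.R := 𝒞.hC (x, r) hCr
      exact Or.inr (genG_combine hrR hranr hyF fun d hd => hZF d (hdomr hd))
    · obtain ⟨φ', hφ', hyφ'⟩ := hy1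
      exact sgmodel_inv 𝒞 F _ hφ' _ hZF y hyφ'
  | zero => intro Z _ y hy; exact absurd hy (Set.notMem_empty y)
  | comp hφ hψ ihφ ihψ =>
    intro Z hZ y hy
    exact ihφ _ (ihψ Z hZ) y hy
  | add hφ hψ ihφ ihψ =>
    intro Z hZ y hy
    rcases hy with hy | hy
    · exact ihφ Z hZ y hy
    · exact ihψ Z hZ y hy

lemma sgmodelF_subset_XF (𝒞 : CRS X) (F : Set X) (Y : Set X) {φ : Set X → Set X}
    (hφ : φ ∈ SgModelF 𝒞 F Y) : ∀ Z : Set X, φ Z ⊆ XF 𝒞 F := by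
  induction hφ with
  | gen h =>
    obtain ⟨x, _, rfl⟩ := h
    intro Z y hy
    exact hy.2
  | zero => intro Z y hy; exact absurd hy (Set.notMem_empty y)
  | comp hφ hψ ihφ ihψ => intro Z y hy; exact ihφ _ hy
  | add hφ hψ ihφ ihψ =>
    intro Z y hy
    rcases hy with hy | hy
    · exact ihφ Z hy
    · exact ihψ Z hy

lemma genG_to_genFrom {𝒞 : CRS X} {F : Set X} {x : X} (h : GenG 𝒞 F x) :
    GenFrom 𝒞 (foodClosure 𝒞 F) false x := by
  obtain ⟨s, ⟨J, ri, μ, h1, h2, h3⟩, hran, hdom⟩ := h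
  have hfun : (fun y => ∑ i ∈ J, (μ i : ℤ) * ri i y) = s := funext fun y => (h3 y).symm
  refine ⟨J, ri, μ, 1, fun _ => J, h1, h2, ?_, ?_, one_pos, ?_, ?_, ?_, ?_, ?_⟩
  · rw [hfun]; exact hran
  · rw [hfun]; exact hdom
  · intro j k hj hk hjk
    exact absurd (by omega : j = k) hjk
  · simp
  · rw [hfun]; exact hdom
  · intro j hj
    omega
  · intro hc
    simp at hc

end Aux

/-- every chemical in `Φ_{X_F}(∅)` is generated from `F̄`
(conditions (F1),(F2) with `W = F̄`). -/
theorem PhiXF_empty_generated_from_food {X : Type u} [Finite X]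
    (𝒞 : CRS X) (F : Set X) :
    ∀ x ∈ PhiSubF 𝒞 F (XF 𝒞 F) ∅, GenFrom 𝒞 (foodClosure 𝒞 F) false x := by
  rintro x ⟨φ, hφ, hx⟩
  have hxXF : x ∈ XF 𝒞 F := sgmodelF_subset_XF 𝒞 F _ hφ ∅ hx
  have hxF : x ∉ foodClosure 𝒞 F := hxXF
  rcases sgmodelF_inv 𝒞 F _ hφ ∅ (fun z hz => absurd hz (Set.notMem_empty z)) x hx with
    h | h
  · exact absurd h hxF
  · exact genG_to_genFrom h
end
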